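/- If τ i > 0 for all i and s is a critical point of the direct-uplift loss L (i.e., for every j the function t ↦ L(Function.update s j t) has derivative 0 at s j), then for all indices i, j one has s i < s j if and only if τ i < τ j; that is, the scores s rank the treatment effects τ. -/

import Mathlib

/-- at a critical point of the direct-uplift loss, the scores `s`
rank the treatment effects `τ`. -/
theorem direct_uplift_ranks
    (N : ℕ) (hN : 0 < N) (s τ : Fin N → ℝ)
    (L : (Fin N → ℝ) → ℝ)
    (hL : L = fun u : Fin N → ℝ =>
      -(1 / (N : ℝ)) * ∑ i, τ i * Real.log (Real.exp (u i) / ∑ k, Real.exp (u k)))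
    (hτ : ∀ i, 0 < τ i)
    (hcrit : ∀ j : Fin N, HasDerivAt (fun t : ℝ => L (Function.update s j t)) 0 (s j)) :
    ∀ i j : Fin N, s i < s j ↔ τ i < τ j := by
  subst hL
  have hZpos : 0 < ∑ k, Real.exp (s k) :=
    Finset.sum_pos (fun k _ => Real.exp_pos _) ⟨⟨0, hN⟩, Finset.mem_univ _⟩
  set Z : ℝ := ∑ k, Real.exp (s k) with hZ
  have hTpos : 0 < ∑ i, τ i :=
    Finset.sum_pos (fun i _ => hτ i) ⟨⟨0, hN⟩, Finset.mem_univ _⟩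
  set T : ℝ := ∑ i, τ i with hT
  have hNne : (1 / (N : ℝ)) ≠ 0 := by
    have : (0:ℝ) < N := by exact_mod_cast hN
    positivity
  have key : ∀ j, τ j * Z = T * Real.exp (s j) := by
    intro j
    set C : ℝ := ∑ k ∈ Finset.univ.erase j, Real.exp (s k) with hC
    have hCnonneg : 0 ≤ C := Finset.sum_nonneg fun k _ => (Real.exp_pos _).le
    have hsum : ∀ t : ℝ, ∑ k, Real.exp (Function.update s j t k) = Real.exp t + C := by
      intro t
      have h1 : ∀ k, Real.exp (Function.update s j t k)
          = Function.update (fun k => Real.exp (s k)) j (Real.exp t) k := by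
        intro k
        by_cases hk : k = j
        · subst hk; simp
        · simp [Function.update_of_ne hk]
      simp_rw [h1]
      rw [Finset.sum_update_of_mem (Finset.mem_univ j), ← Finset.erase_eq]
    set A : ℝ := ∑ i ∈ Finset.univ.erase j, τ i * s i with hA
    have hfun : (fun t : ℝ => -(1/(N:ℝ)) * ∑ i, τ i *
          Real.log (Real.exp (Function.update s j t i) / ∑ k, Real.exp (Function.update s j t k)))
        = fun t : ℝ => -(1/(N:ℝ)) * (τ j * t + A - T * Real.log (Real.exp t + C)) := by
      funext t
      have hpos : 0 < Real.exp t + C := by positivity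
      congr 1
      simp_rw [hsum t]
      have h2 : ∀ i, τ i * Real.log (Real.exp (Function.update s j t i) / (Real.exp t + C))
          = τ i * Function.update s j t i - τ i * Real.log (Real.exp t + C) := by
        intro i
        rw [Real.log_div (Real.exp_ne_zero _) (ne_of_gt hpos), Real.log_exp, mul_sub]
      simp_rw [h2, Finset.sum_sub_distrib, ← Finset.sum_mul, ← hT]
      congr 1
      rw [← Finset.add_sum_erase _ _ (Finset.mem_univ j), Function.update_self]
      congr 1
      apply Finset.sum_congr rfl
      intro i hi
      rw [Function.update_of_ne (Finset.ne_of_mem_erase hi)]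
    have hpos : 0 < Real.exp (s j) + C := by positivity
    have h1 : HasDerivAt (fun t : ℝ => Real.exp t + C) (Real.exp (s j)) (s j) :=
      (Real.hasDerivAt_exp _).add_const C
    have h2 : HasDerivAt (fun t => Real.log (Real.exp t + C))
        (Real.exp (s j) / (Real.exp (s j) + C)) (s j) := h1.log (ne_of_gt hpos)
    have h3 : HasDerivAt (fun t : ℝ => -(1/(N:ℝ)) * (τ j * t + A - T * Real.log (Real.exp t + C)))
        (-(1/(N:ℝ)) * (τ j - T * (Real.exp (s j) / (Real.exp (s j) + C)))) (s j) := by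
      have := ((((hasDerivAt_id (s j)).const_mul (τ j)).add_const A).sub
        (h2.const_mul T)).const_mul (-(1/(N:ℝ)))
      exact this.congr_deriv (by ring)
    have h4 := hcrit j
    rw [hfun] at h4
    have h5 := h4.unique h3
    have h6 : τ j = T * (Real.exp (s j) / (Real.exp (s j) + C)) := by
      have := mul_eq_zero.mp h5.symm
      rcases this with h | h
      · exact absurd h (by simpa using hNne)
      · linarith [sub_eq_zero.mp h]
    have hZC : Z = Real.exp (s j) + C := by
      have := hsum (s j)
      rwa [Function.update_eq_self] at this
    rw [hZC, h6]
    field_simp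
  intro i j
  rw [← Real.exp_lt_exp, ← mul_lt_mul_iff_right₀ hTpos, ← key i, ← key j,
    mul_lt_mul_iff_left₀ hZpos]
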